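/- arXiv:1107.0463 — 3 statements merged into one kernel-verified Lean document; each statement's English description precedes it below -/
import Mathlib

section
/- Let (λ_j)_{j∈ℕ} be a nondecreasing sequence of nonnegative real numbers tending to +∞, let (b_j)_{j∈ℕ} be nonnegative real numbers, and let τ > 0, s > 0, C > 0. Assume that the tempered sums P(Λ) := ∑_{j : λ_j ≤ Λ} e^{−2τλ_j} b_j satisfy P(Λ)/Λ^s → C as Λ → +∞. Then (1/Λ) · log(∑_{j : λ_j ≤ Λ} b_j) → 2τ as Λ → +∞. -/
open Filter

lemma aux_summable (lam : ℕ → ℝ) (htend : Tendsto lam atTop atTop) (g : ℕ → ℝ) (Λ : ℝ) :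
    Summable (fun j => if lam j ≤ Λ then g j else 0) := by
  obtain ⟨N, hN⟩ := (htend.eventually_gt_atTop Λ).exists_forall_of_atTop
  apply summable_of_ne_finset_zero (s := Finset.range N)
  intro j hj
  rw [if_neg (not_le.2 (hN j (by simpa using hj)))]

lemma aux_pos (g : ℝ → ℝ) (s C : ℝ) (hC : 0 < C)
    (h : Tendsto (fun Λ => g Λ / Λ ^ s) atTop (nhds C)) :
    ∀ᶠ Λ : ℝ in atTop, 0 < g Λ := by
  filter_upwards [h.eventually (eventually_gt_nhds (half_lt_self hC)), eventually_gt_atTop 0]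
    with Λ h1 h2
  have hpow : (0:ℝ) < Λ ^ s := Real.rpow_pos_of_pos h2 s
  have := (lt_div_iff₀ hpow).1 h1
  nlinarith

lemma aux_log (g : ℝ → ℝ) (s C : ℝ) (hC : 0 < C)
    (h : Tendsto (fun Λ => g Λ / Λ ^ s) atTop (nhds C)) :
    Tendsto (fun Λ => Real.log (g Λ) / Λ) atTop (nhds 0) := by
  have hev : ∀ᶠ Λ : ℝ in atTop, 0 < Λ ∧ 0 < g Λ :=
    (eventually_gt_atTop 0).and (aux_pos g s C hC h) |>.mono (fun Λ h => ⟨h.1, h.2⟩)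
  have hmain : Tendsto (fun Λ => Real.log (g Λ / Λ ^ s) / Λ + s * (Real.log Λ / Λ)) atTop
      (nhds 0) := by
    have h1 : Tendsto (fun Λ => Real.log (g Λ / Λ ^ s) / Λ) atTop (nhds 0) := by
      have hl : Tendsto (fun Λ => Real.log (g Λ / Λ ^ s)) atTop (nhds (Real.log C)) :=
        ((Real.continuousAt_log hC.ne').tendsto).comp h
      simpa [div_eq_mul_inv] using hl.mul tendsto_inv_atTop_zero
    have h2 : Tendsto (fun Λ : ℝ => s * (Real.log Λ / Λ)) atTop (nhds (s * 0)) :=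
      (Real.isLittleO_log_id_atTop.tendsto_div_nhds_zero).const_mul s
    simpa using h1.add h2
  refine hmain.congr' ?_
  filter_upwards [hev] with Λ ⟨hΛ, hg⟩
  have hpow : (0:ℝ) < Λ ^ s := Real.rpow_pos_of_pos hΛ s
  rw [Real.log_div hg.ne' hpow.ne', Real.log_rpow hΛ]
  field_simp
  ring

lemma aux_main (P S : ℝ → ℝ) (τ s C : ℝ) (hτ : 0 < τ) (hs : 0 < s) (hC : 0 < C)
    (hPS : ∀ Λ, P Λ ≤ S Λ)
    (hupper : ∀ Λ, 0 ≤ Λ → S Λ ≤ Real.exp (2 * τ * Λ) * P Λ)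
    (hlower : ∀ δ Λ, 0 < δ → δ < 1 → 0 ≤ Λ →
      Real.exp (2 * τ * (1 - δ) * Λ) * (P Λ - P ((1 - δ) * Λ)) ≤ S Λ)
    (hP : Tendsto (fun Λ => P Λ / Λ ^ s) atTop (nhds C)) :
    Tendsto (fun Λ => Real.log (S Λ) / Λ) atTop (nhds (2 * τ)) := by
  refine tendsto_order.2 ⟨?_, ?_⟩
  · -- lower bound
    intro c hc
    set δ : ℝ := min ((2 * τ - c) / (4 * τ)) (1 / 2) with hδdef
    have hδ0 : 0 < δ := lt_min (div_pos (by linarith) (by positivity)) (by norm_num)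
    have hδ1 : δ < 1 := lt_of_le_of_lt (min_le_right _ _) (by norm_num)
    have hkey : c < 2 * τ * (1 - δ) := by
      have h1 : δ ≤ (2 * τ - c) / (4 * τ) := min_le_left _ _
      have h2 : δ * (4 * τ) ≤ 2 * τ - c := (le_div_iff₀ (by positivity)).1 h1
      nlinarith
    set Q : ℝ → ℝ := fun Λ => P Λ - P ((1 - δ) * Λ) with hQdef
    have h1δ : (0:ℝ) < 1 - δ := by linarith
    have hQtend : Tendsto (fun Λ => Q Λ / Λ ^ s) atTop (nhds (C - C * (1 - δ) ^ s)) := by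
      have hcomp : Tendsto (fun Λ : ℝ => P ((1 - δ) * Λ) / ((1 - δ) * Λ) ^ s) atTop (nhds C) :=
        hP.comp (tendsto_id.const_mul_atTop h1δ)
      have hmul : Tendsto (fun Λ : ℝ => P ((1 - δ) * Λ) / ((1 - δ) * Λ) ^ s * (1 - δ) ^ s)
          atTop (nhds (C * (1 - δ) ^ s)) := hcomp.mul_const _
      have hcong : Tendsto (fun Λ : ℝ => P ((1 - δ) * Λ) / Λ ^ s) atTop
          (nhds (C * (1 - δ) ^ s)) := by
        refine hmul.congr' ?_
        filter_upwards [eventually_gt_atTop 0] with Λ hΛ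
        have e1 : ((1 - δ) * Λ) ^ s = (1 - δ) ^ s * Λ ^ s := Real.mul_rpow h1δ.le hΛ.le
        have hp1 : (0:ℝ) < (1 - δ) ^ s := Real.rpow_pos_of_pos h1δ s
        have hp2 : (0:ℝ) < Λ ^ s := Real.rpow_pos_of_pos hΛ s
        rw [e1]
        field_simp
      simpa [hQdef, sub_div] using hP.sub hcong
    have hC' : 0 < C - C * (1 - δ) ^ s := by
      have : (1 - δ) ^ s < 1 := Real.rpow_lt_one h1δ.le (by linarith) hs
      nlinarith
    have hlogQ := aux_log Q s _ hC' hQtend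
    have hlim : Tendsto (fun Λ => 2 * τ * (1 - δ) + Real.log (Q Λ) / Λ) atTop
        (nhds (2 * τ * (1 - δ))) := by simpa using tendsto_const_nhds.add hlogQ
    filter_upwards [hlim.eventually (eventually_gt_nhds hkey),
      aux_pos Q s _ hC' hQtend, eventually_gt_atTop 0] with Λ h1 hQp hΛ
    have hSineq : Real.exp (2 * τ * (1 - δ) * Λ) * Q Λ ≤ S Λ := hlower δ Λ hδ0 hδ1 hΛ.le
    have hlogS : 2 * τ * (1 - δ) * Λ + Real.log (Q Λ) ≤ Real.log (S Λ) := by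
      have := Real.log_le_log (by positivity) hSineq
      rwa [Real.log_mul (Real.exp_ne_zero _) hQp.ne', Real.log_exp] at this
    have h2 : 2 * τ * (1 - δ) + Real.log (Q Λ) / Λ ≤ Real.log (S Λ) / Λ := by
      rw [le_div_iff₀ hΛ]
      have e : (2 * τ * (1 - δ) + Real.log (Q Λ) / Λ) * Λ
          = 2 * τ * (1 - δ) * Λ + Real.log (Q Λ) := by field_simp
      linarith [e.le, e.ge]
    linarith
  · -- upper bound
    intro c hc
    have hlogP := aux_log P s C hC hP
    have hlim : Tendsto (fun Λ => 2 * τ + Real.log (P Λ) / Λ) atTop (nhds (2 * τ)) := by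
      simpa using tendsto_const_nhds.add hlogP
    filter_upwards [hlim.eventually (eventually_lt_nhds hc),
      aux_pos P s C hC hP, eventually_gt_atTop 0] with Λ h1 hPp hΛ
    have hSpos : 0 < S Λ := lt_of_lt_of_le hPp (hPS Λ)
    have hlogS : Real.log (S Λ) ≤ 2 * τ * Λ + Real.log (P Λ) := by
      have := Real.log_le_log hSpos (hupper Λ hΛ.le)
      rwa [Real.log_mul (Real.exp_ne_zero _) hPp.ne', Real.log_exp] at this
    have h2 : Real.log (S Λ) / Λ ≤ 2 * τ + Real.log (P Λ) / Λ := by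
      rw [div_le_iff₀ hΛ]
      have : (2 * τ + Real.log (P Λ) / Λ) * Λ = 2 * τ * Λ + Real.log (P Λ) := by
        field_simp
      linarith [hlogS, this.ge]
    linarith

/-- Polynomial asymptotics of the tempered spectral sums imply logarithmic
asymptotics of the untempered sums. -/
theorem log_asymptotics_of_tempered_weyl
    (lam b : ℕ → ℝ) (hmono : Monotone lam) (hlam : ∀ j, 0 ≤ lam j)
    (htend : Tendsto lam atTop atTop) (hb : ∀ j, 0 ≤ b j)
    (τ s C : ℝ) (hτ : 0 < τ) (hs : 0 < s) (hC : 0 < C)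
    (hP : Tendsto
      (fun Λ : ℝ => (∑' j, if lam j ≤ Λ then Real.exp (-2 * τ * lam j) * b j else 0) / Λ ^ s)
      atTop (nhds C)) :
    Tendsto (fun Λ : ℝ => Real.log (∑' j, if lam j ≤ Λ then b j else 0) / Λ)
      atTop (nhds (2 * τ)) := by
  have hsumP : ∀ Λ : ℝ,
      Summable (fun j => if lam j ≤ Λ then Real.exp (-2 * τ * lam j) * b j else 0) :=
    fun Λ => aux_summable lam htend _ Λ
  have hsumS : ∀ Λ : ℝ, Summable (fun j => if lam j ≤ Λ then b j else 0) :=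
    fun Λ => aux_summable lam htend _ Λ
  refine aux_main
    (fun Λ => ∑' j, if lam j ≤ Λ then Real.exp (-2 * τ * lam j) * b j else 0)
    (fun Λ => ∑' j, if lam j ≤ Λ then b j else 0) τ s C hτ hs hC ?_ ?_ ?_ hP
  · intro Λ
    refine Summable.tsum_le_tsum (fun j => ?_) (hsumP Λ) (hsumS Λ)
    by_cases h : lam j ≤ Λ
    · simp only [if_pos h]
      have : Real.exp (-2 * τ * lam j) ≤ 1 := Real.exp_le_one_iff.2 (by nlinarith [hlam j])
      exact mul_le_of_le_one_left (hb j) this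
    · simp [h]
  · intro Λ hΛ
    rw [← tsum_mul_left]
    refine Summable.tsum_le_tsum (fun j => ?_) (hsumS Λ) ((hsumP Λ).mul_left _)
    by_cases h : lam j ≤ Λ
    · simp only [if_pos h]
      rw [← mul_assoc, ← Real.exp_add]
      refine le_mul_of_one_le_left (hb j) (Real.one_le_exp ?_)
      nlinarith
    · simp [h]
  · intro δ Λ hδ0 hδ1 hΛ
    have h1δΛ : (1 - δ) * Λ ≤ Λ := by nlinarith
    have key : (∑' j, if lam j ≤ Λ then Real.exp (-2 * τ * lam j) * b j else 0)
        - (∑' j, if lam j ≤ (1 - δ) * Λ then Real.exp (-2 * τ * lam j) * b j else 0)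
        ≤ Real.exp (-(2 * τ * (1 - δ) * Λ)) * ∑' j, if lam j ≤ Λ then b j else 0 := by
      rw [← Summable.tsum_sub (hsumP Λ) (hsumP ((1 - δ) * Λ)), ← tsum_mul_left]
      refine Summable.tsum_le_tsum (fun j => ?_) ((hsumP Λ).sub (hsumP ((1 - δ) * Λ)))
        ((hsumS Λ).mul_left _)
      by_cases h1 : lam j ≤ (1 - δ) * Λ
      · have h2 : lam j ≤ Λ := h1.trans h1δΛ
        simp only [if_pos h1, if_pos h2, sub_self]
        exact mul_nonneg (Real.exp_nonneg _) (hb j)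
      · by_cases h2 : lam j ≤ Λ
        · simp only [if_pos h2, if_neg h1, sub_zero]
          refine mul_le_mul_of_nonneg_right (Real.exp_le_exp.2 ?_) (hb j)
          nlinarith [not_le.1 h1]
        · simp [h1, h2]
    have h3 := mul_le_mul_of_nonneg_left key (Real.exp_nonneg (2 * τ * (1 - δ) * Λ))
    rw [← mul_assoc, ← Real.exp_add] at h3
    simpa using h3
end

section
/- Let n ≥ 1, t ∈ ℝ, τ > 0, and y ∈ ℝⁿ. Then the function F : ℂⁿ → ℂ defined by F(z) = ∫_{ℝⁿ} e^{i(t+iτ)‖ξ‖} exp(i ∑_{j=1}^n ξ_j (z_j − y_j)) dξ is complex differentiable (holomorphic) on the tube domain {z ∈ ℂⁿ : ‖Im z‖ < τ}, where Im z = (Im z_1, …, Im z_n). -/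
open MeasureTheory Complex Metric

set_option maxHeartbeats 1000000
set_option synthInstance.maxHeartbeats 400000

lemma pk_integrable_exp_neg_norm (n : ℕ) {c : ℝ} (hc : 0 < c) :
    Integrable (fun ξ : EuclideanSpace ℝ (Fin n) => Real.exp (-(c * ‖ξ‖))) := by
  set m : ℕ := n + 1 with hm
  set c' : ℝ := c / m with hc'
  have hc'0 : 0 < c' := by positivity
  set K : ℝ := 1 + 1 / c' with hK
  have hK1 : (1:ℝ) ≤ K := by
    have : 0 < 1 / c' := by positivity
    simp only [hK]; linarith
  have key : ∀ x : ℝ, 0 ≤ x → Real.exp (-(c * x)) ≤ K ^ m * (1 + x) ^ (-(m : ℝ)) := by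
    intro x hx
    have h1x : (0:ℝ) < 1 + x := by linarith
    have hbpos : (0:ℝ) < (1 + x) ^ m := by positivity
    rw [Real.rpow_neg h1x.le, Real.rpow_natCast, ← div_eq_mul_inv, le_div_iff₀ hbpos]
    have hstep : (1 + x) ≤ K * Real.exp (c' * x) := by
      have h1 := Real.add_one_le_exp (c' * x)
      have hinv : 1 / c' * (c' * x) = x := by field_simp
      have h2 : 1 + x ≤ K * (c' * x + 1) := by
        have hnn := mul_nonneg hc'0.le hx
        have h3 : 0 ≤ 1 / c' := by positivity
        have hexpand : K * (c' * x + 1) = c' * x + 1 + 1 / c' * (c' * x) + 1 / c' := by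
          rw [hK]; ring
        rw [hexpand, hinv]; linarith
      calc 1 + x ≤ K * (c' * x + 1) := h2
        _ ≤ K * Real.exp (c' * x) := by
            have hK0 : (0:ℝ) ≤ K := by linarith
            exact mul_le_mul_of_nonneg_left h1 hK0
    have hpow : (1 + x) ^ m ≤ K ^ m * Real.exp (c * x) := by
      have := pow_le_pow_left₀ h1x.le hstep m
      rw [mul_pow, ← Real.exp_nat_mul] at this
      have hcm : (m : ℝ) * (c' * x) = c * x := by
        have hm0 : (m : ℝ) ≠ 0 := by positivity
        rw [hc']; field_simp
      rwa [hcm] at this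
    calc Real.exp (-(c * x)) * (1 + x) ^ m
        ≤ Real.exp (-(c * x)) * (K ^ m * Real.exp (c * x)) := by
          exact mul_le_mul_of_nonneg_left hpow (Real.exp_nonneg _)
      _ = K ^ m := by
          rw [show Real.exp (-(c * x)) * (K ^ m * Real.exp (c * x))
              = K ^ m * (Real.exp (c * x) * Real.exp (-(c * x))) from by ring,
            ← Real.exp_add]
          simp
  have hfin : Integrable (fun x : EuclideanSpace ℝ (Fin n) => (1 + ‖x‖) ^ (-(m : ℝ))) := by
    apply integrable_one_add_norm
    rw [finrank_euclideanSpace_fin]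
    exact_mod_cast Nat.lt_succ_self n
  refine ((hfin.const_mul (K ^ m)).mono' ?_ ?_)
  · exact (Real.continuous_exp.comp (by fun_prop)).aestronglyMeasurable
  · filter_upwards with ξ
    rw [Real.norm_eq_abs, _root_.abs_of_nonneg (Real.exp_nonneg _)]
    exact key ‖ξ‖ (norm_nonneg _)

lemma pk_integrable_norm_mul_exp (n : ℕ) {c : ℝ} (hc : 0 < c) :
    Integrable (fun ξ : EuclideanSpace ℝ (Fin n) => ‖ξ‖ * Real.exp (-(c * ‖ξ‖))) := by
  refine ((pk_integrable_exp_neg_norm n (half_pos hc)).const_mul (2 / c)).mono' ?_ ?_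
  · exact (continuous_norm.mul (Real.continuous_exp.comp (by fun_prop))).aestronglyMeasurable
  · filter_upwards with ξ
    rw [Real.norm_eq_abs, _root_.abs_of_nonneg (by positivity)]
    set x := ‖ξ‖ with hxdef
    have hx : 0 ≤ x := norm_nonneg _
    have h1 : x ≤ 2 / c * Real.exp (c / 2 * x) := by
      have h2 : c / 2 * x ≤ Real.exp (c / 2 * x) :=
        le_trans (by linarith [Real.add_one_le_exp (c / 2 * x)]) (le_refl _)
      have h3 : 2 / c * (c / 2 * x) = x := by field_simp
      calc x = 2 / c * (c / 2 * x) := h3.symm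
        _ ≤ 2 / c * Real.exp (c / 2 * x) :=
            mul_le_mul_of_nonneg_left h2 (by positivity)
    calc x * Real.exp (-(c * x))
        ≤ (2 / c * Real.exp (c / 2 * x)) * Real.exp (-(c * x)) :=
          mul_le_mul_of_nonneg_right h1 (Real.exp_nonneg _)
      _ = 2 / c * Real.exp (-(c / 2 * x)) := by
          rw [mul_assoc, ← Real.exp_add]
          congr 1
          ring

lemma pk_coord_le_norm {n : ℕ} (ξ : EuclideanSpace ℝ (Fin n)) (j : Fin n) : |ξ j| ≤ ‖ξ‖ := by
  rw [EuclideanSpace.norm_eq, ← Real.sqrt_sq_eq_abs]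
  apply Real.sqrt_le_sqrt
  calc (ξ j) ^ 2 = ‖ξ j‖ ^ 2 := by rw [Real.norm_eq_abs, _root_.sq_abs]
    _ ≤ ∑ i, ‖ξ i‖ ^ 2 :=
        Finset.single_le_sum (f := fun i => ‖ξ i‖ ^ 2) (fun i _ => by positivity)
          (Finset.mem_univ j)

lemma pk_cont_coord {n : ℕ} (j : Fin n) :
    Continuous (fun ξ : EuclideanSpace ℝ (Fin n) => ξ j) :=
  (EuclideanSpace.proj j : EuclideanSpace ℝ (Fin n) →L[ℝ] ℝ).continuous

/-- Cauchy–Schwarz: `|∑ ξ j * v j| ≤ ‖ξ‖ * sqrt (∑ v j ^ 2)`. -/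
lemma pk_cauchy_schwarz {n : ℕ} (ξ : EuclideanSpace ℝ (Fin n)) (v : Fin n → ℝ) :
    |∑ j, ξ j * v j| ≤ ‖ξ‖ * Real.sqrt (∑ j, v j ^ 2) := by
  set w : EuclideanSpace ℝ (Fin n) := (WithLp.equiv 2 (Fin n → ℝ)).symm v with hw
  have hwj : ∀ j, w j = v j := fun j => rfl
  have h1 : (∑ j, ξ j * v j) = inner ℝ ξ w := by
    rw [PiLp.inner_apply]
    simp [hwj, mul_comm]
  have h2 : ‖w‖ = Real.sqrt (∑ j, v j ^ 2) := by
    rw [EuclideanSpace.norm_eq]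
    congr 1
    refine Finset.sum_congr rfl fun j _ => ?_
    rw [hwj, Real.norm_eq_abs, _root_.sq_abs]
  rw [h1, ← h2]
  exact abs_real_inner_le_norm ξ w

/-- Holomorphy in the space variable of the analytically continued Euclidean
Poisson-wave kernel on the tube `{z : ‖Im z‖ < τ}`. -/
theorem poisson_kernel_holomorphic_space (n : ℕ) (hn : 1 ≤ n) (t τ : ℝ) (hτ : 0 < τ)
    (y : Fin n → ℝ) :
    DifferentiableOn ℂ
      (fun z : Fin n → ℂ =>
        ∫ ξ : EuclideanSpace ℝ (Fin n),
          Complex.exp (Complex.I * ((t : ℂ) + τ * Complex.I) * ‖ξ‖) *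
            Complex.exp (Complex.I * ∑ j, (ξ j : ℂ) * (z j - (y j : ℂ))))
      {z : Fin n → ℂ | Real.sqrt (∑ j, (z j).im ^ 2) < τ} := by
  intro z₀ hz₀
  set s : ℝ := Real.sqrt (∑ j, (z₀ j).im ^ 2) with hs
  have hz₀' : s < τ := hz₀
  have hs0 : 0 ≤ s := Real.sqrt_nonneg _
  set δ : ℝ := (τ - s) / 2 with hδdef
  have hδ : 0 < δ := by simp only [hδdef]; linarith
  set ε : ℝ := δ / (n + 1) with hεdef
  have hε : 0 < ε := by positivity
  set L : EuclideanSpace ℝ (Fin n) → (Fin n → ℂ) →L[ℂ] ℂ :=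
    fun ξ => ∑ j, ((ξ j : ℂ) * Complex.I) • ContinuousLinearMap.proj j with hL
  have hLapply : ∀ ξ w, L ξ w = ∑ j, (ξ j : ℂ) * Complex.I * w j := by
    intro ξ w
    simp [hL, ContinuousLinearMap.sum_apply, ContinuousLinearMap.smul_apply,
      ContinuousLinearMap.proj_apply, smul_eq_mul]
  set F : (Fin n → ℂ) → EuclideanSpace ℝ (Fin n) → ℂ := fun z ξ =>
    Complex.exp (Complex.I * ((t : ℂ) + τ * Complex.I) * ‖ξ‖) *
      Complex.exp (Complex.I * ∑ j, (ξ j : ℂ) * (z j - (y j : ℂ))) with hF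
  -- norm of F
  have hnormF : ∀ (z : Fin n → ℂ) (ξ : EuclideanSpace ℝ (Fin n)),
      ‖F z ξ‖ = Real.exp (-(τ * ‖ξ‖) + -∑ j, ξ j * (z j).im) := by
    intro z ξ
    rw [hF]
    simp only [norm_mul, Complex.norm_exp, ← Real.exp_add]
    congr 1
    have h1 : (Complex.I * ((t : ℂ) + τ * Complex.I) * (‖ξ‖ : ℂ)).re = -(τ * ‖ξ‖) := by
      simp [Complex.mul_re, Complex.mul_im]
    have h2 : (Complex.I * ∑ j, (ξ j : ℂ) * (z j - (y j : ℂ))).re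
        = -∑ j, ξ j * (z j).im := by
      rw [Complex.mul_re]
      simp only [Complex.I_re, Complex.I_im, zero_mul, one_mul, zero_sub, neg_inj]
      rw [Complex.im_sum]
      exact Finset.sum_congr rfl fun j _ => by
        simp [Complex.mul_im, Complex.ofReal_re, Complex.ofReal_im, Complex.sub_im]
    rw [h1, h2]
  -- bound on ‖F z ξ‖ for z in the ball
  have him : ∀ z ∈ ball z₀ ε, Real.sqrt (∑ j, (z j).im ^ 2) ≤ s + δ := by
    intro z hz
    have hd : ∀ j, |(z j).im - (z₀ j).im| ≤ ε := by
      intro j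
      have h1 : |(z j - z₀ j).im| ≤ ‖z j - z₀ j‖ := Complex.abs_im_le_norm _
      have h2 : ‖z j - z₀ j‖ ≤ ‖z - z₀‖ := by
        have := norm_le_pi_norm (z - z₀) j
        simpa using this
      have h3 : ‖z - z₀‖ < ε := by rwa [← dist_eq_norm, ← mem_ball]
      calc |(z j).im - (z₀ j).im| = |(z j - z₀ j).im| := by rw [Complex.sub_im]
        _ ≤ ‖z - z₀‖ := le_trans h1 h2
        _ ≤ ε := h3.le
    -- triangle inequality via sqrt
    have key : Real.sqrt (∑ j, ((z j).im - (z₀ j).im) ^ 2) ≤ δ := by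
      have hsum : (∑ j, ((z j).im - (z₀ j).im) ^ 2) ≤ n * ε ^ 2 := by
        calc (∑ j, ((z j).im - (z₀ j).im) ^ 2) ≤ ∑ _j : Fin n, ε ^ 2 := by
              refine Finset.sum_le_sum fun j _ => ?_
              have := hd j
              nlinarith [abs_nonneg ((z j).im - (z₀ j).im), _root_.sq_abs ((z j).im - (z₀ j).im)]
          _ = n * ε ^ 2 := by rw [Finset.sum_const, Finset.card_univ, Fintype.card_fin]; ring
      calc Real.sqrt (∑ j, ((z j).im - (z₀ j).im) ^ 2) ≤ Real.sqrt (n * ε ^ 2) :=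
            Real.sqrt_le_sqrt hsum
        _ = Real.sqrt n * ε := by
            rw [Real.sqrt_mul (by positivity), Real.sqrt_sq hε.le]
        _ ≤ (n + 1) * ε := by
            have h4 : Real.sqrt n ≤ n + 1 := by
              rw [show (n : ℝ) + 1 = Real.sqrt ((n + 1) ^ 2) from
                (Real.sqrt_sq (by positivity)).symm]
              apply Real.sqrt_le_sqrt; nlinarith [Nat.cast_nonneg (α := ℝ) n]
            exact mul_le_mul_of_nonneg_right h4 hε.le
        _ = δ := by rw [hεdef]; field_simp
    -- sqrt of sum of squares is a norm: use Euclidean vectors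
    have h5 : Real.sqrt (∑ j, (z j).im ^ 2)
        ≤ Real.sqrt (∑ j, (z₀ j).im ^ 2) + Real.sqrt (∑ j, ((z j).im - (z₀ j).im) ^ 2) := by
      set a : EuclideanSpace ℝ (Fin n) := (WithLp.equiv 2 (Fin n → ℝ)).symm (fun j => (z j).im)
      set b : EuclideanSpace ℝ (Fin n) := (WithLp.equiv 2 (Fin n → ℝ)).symm (fun j => (z₀ j).im)
      have hna : ‖a‖ = Real.sqrt (∑ j, (z j).im ^ 2) := by
        rw [EuclideanSpace.norm_eq]; congr 1
        exact Finset.sum_congr rfl fun j _ => by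
          rw [Real.norm_eq_abs, _root_.sq_abs]; rfl
      have hnb : ‖b‖ = Real.sqrt (∑ j, (z₀ j).im ^ 2) := by
        rw [EuclideanSpace.norm_eq]; congr 1
        exact Finset.sum_congr rfl fun j _ => by
          rw [Real.norm_eq_abs, _root_.sq_abs]; rfl
      have hnab : ‖a - b‖ = Real.sqrt (∑ j, ((z j).im - (z₀ j).im) ^ 2) := by
        rw [EuclideanSpace.norm_eq]; congr 1
        exact Finset.sum_congr rfl fun j _ => by
          rw [Real.norm_eq_abs, _root_.sq_abs]; rfl
      calc Real.sqrt (∑ j, (z j).im ^ 2) = ‖a‖ := hna.symm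
        _ = ‖b + (a - b)‖ := by rw [add_sub_cancel]
        _ ≤ ‖b‖ + ‖a - b‖ := norm_add_le _ _
        _ = _ := by rw [hnb, hnab]
    calc Real.sqrt (∑ j, (z j).im ^ 2)
        ≤ Real.sqrt (∑ j, (z₀ j).im ^ 2) + Real.sqrt (∑ j, ((z j).im - (z₀ j).im) ^ 2) := h5
      _ ≤ s + δ := by rw [← hs]; linarith [key]
  have hFbound : ∀ z ∈ ball z₀ ε, ∀ ξ : EuclideanSpace ℝ (Fin n),
      ‖F z ξ‖ ≤ Real.exp (-(δ * ‖ξ‖)) := by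
    intro z hz ξ
    rw [hnormF]
    apply Real.exp_le_exp.mpr
    have hcs := pk_cauchy_schwarz ξ (fun j => (z j).im)
    have h6 : -∑ j, ξ j * (z j).im ≤ ‖ξ‖ * (s + δ) := by
      have h7 : -∑ j, ξ j * (z j).im ≤ |∑ j, ξ j * (z j).im| := neg_le_abs _
      have h8 : Real.sqrt (∑ j, (z j).im ^ 2) ≤ s + δ := him z hz
      calc -∑ j, ξ j * (z j).im ≤ |∑ j, ξ j * (z j).im| := h7
        _ ≤ ‖ξ‖ * Real.sqrt (∑ j, (z j).im ^ 2) := hcs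
        _ ≤ ‖ξ‖ * (s + δ) := mul_le_mul_of_nonneg_left h8 (norm_nonneg _)
    have hτeq : τ = s + 2 * δ := by rw [hδdef]; ring
    nlinarith [norm_nonneg ξ]
  -- operator norm of L
  have hLnorm : ∀ ξ : EuclideanSpace ℝ (Fin n), ‖L ξ‖ ≤ n * ‖ξ‖ := by
    intro ξ
    apply ContinuousLinearMap.opNorm_le_bound _ (by positivity)
    intro w
    rw [hLapply]
    calc ‖∑ j, (ξ j : ℂ) * Complex.I * w j‖ ≤ ∑ j, ‖(ξ j : ℂ) * Complex.I * w j‖ :=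
          norm_sum_le _ _
      _ ≤ ∑ _j : Fin n, ‖ξ‖ * ‖w‖ := by
          refine Finset.sum_le_sum fun j _ => ?_
          rw [norm_mul, norm_mul, Complex.norm_I, mul_one, Complex.norm_real,
            Real.norm_eq_abs]
          exact mul_le_mul (pk_coord_le_norm ξ j) (norm_le_pi_norm w j)
            (norm_nonneg _) (norm_nonneg _)
      _ = n * ‖ξ‖ * ‖w‖ := by
          rw [Finset.sum_const, Finset.card_univ, Fintype.card_fin]; ring
  -- derivative of F in z
  have hderiv : ∀ (ξ : EuclideanSpace ℝ (Fin n)) (z : Fin n → ℂ),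
      HasFDerivAt (fun z' => F z' ξ) ((F z ξ) • L ξ) z := by
    intro ξ z
    have hgL : ∀ z' : Fin n → ℂ,
        Complex.I * ∑ j, (ξ j : ℂ) * (z' j - (y j : ℂ))
          = L ξ z' + (-(Complex.I * ∑ j, (ξ j : ℂ) * (y j : ℂ))) := by
      intro z'
      rw [hLapply, Finset.mul_sum, Finset.mul_sum, ← sub_eq_add_neg,
        ← Finset.sum_sub_distrib]
      exact Finset.sum_congr rfl fun j _ => by ring
    have hgderiv : HasFDerivAt
        (fun z' : Fin n → ℂ => Complex.I * ∑ j, (ξ j : ℂ) * (z' j - (y j : ℂ)))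
        (L ξ) z := by
      have : (fun z' : Fin n → ℂ => Complex.I * ∑ j, (ξ j : ℂ) * (z' j - (y j : ℂ)))
          = fun z' => L ξ z' + (-(Complex.I * ∑ j, (ξ j : ℂ) * (y j : ℂ))) :=
        funext hgL
      rw [this]
      exact (L ξ).hasFDerivAt.add_const _
    have hexp : HasFDerivAt
        (fun z' : Fin n → ℂ =>
          Complex.exp (Complex.I * ∑ j, (ξ j : ℂ) * (z' j - (y j : ℂ))))
        (Complex.exp (Complex.I * ∑ j, (ξ j : ℂ) * (z j - (y j : ℂ))) • L ξ) z :=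
      hgderiv.cexp
    have h10 := hexp.const_mul (Complex.exp (Complex.I * ((t : ℂ) + τ * Complex.I) * ‖ξ‖))
    simpa only [hF, smul_smul] using h10
  -- measurability / continuity in ξ
  have hcontF : ∀ z : Fin n → ℂ, Continuous (F z) := by
    intro z
    rw [hF]
    apply Continuous.mul
    · apply Complex.continuous_exp.comp
      exact (continuous_const.mul (Complex.continuous_ofReal.comp continuous_norm))
    · apply Complex.continuous_exp.comp
      apply continuous_const.mul
      apply continuous_finset_sum
      intro j _
      exact (Complex.continuous_ofReal.comp (pk_cont_coord j)).mul continuous_const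
  have hcontL : Continuous L := by
    rw [hL]
    apply continuous_finset_sum
    intro j _
    exact ((Complex.continuous_ofReal.comp (pk_cont_coord j)).mul continuous_const).smul
      continuous_const
  -- integrability
  have hFint : Integrable (F z₀) := by
    refine (pk_integrable_exp_neg_norm n hδ).mono' (hcontF z₀).aestronglyMeasurable ?_
    filter_upwards with ξ
    exact hFbound z₀ (mem_ball_self hε) ξ
  have hboundint : Integrable
      (fun ξ : EuclideanSpace ℝ (Fin n) => (n : ℝ) * (‖ξ‖ * Real.exp (-(δ * ‖ξ‖)))) :=
    (pk_integrable_norm_mul_exp n hδ).const_mul _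
  -- main application
  have main : HasFDerivAt
      (fun z : Fin n → ℂ => ∫ ξ : EuclideanSpace ℝ (Fin n), F z ξ)
      (∫ ξ : EuclideanSpace ℝ (Fin n), (F z₀ ξ) • L ξ) z₀ := by
    apply hasFDerivAt_integral_of_dominated_of_fderiv_le
      (F' := fun (z : Fin n → ℂ) (ξ : EuclideanSpace ℝ (Fin n)) => (F z ξ) • L ξ)
      (bound := fun ξ => (n : ℝ) * (‖ξ‖ * Real.exp (-(δ * ‖ξ‖)))) (ball_mem_nhds z₀ hε)
    · exact Filter.Eventually.of_forall fun z => (hcontF z).aestronglyMeasurable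
    · exact hFint
    · exact ((hcontF z₀).smul hcontL).aestronglyMeasurable
    · filter_upwards with ξ
      intro z hz
      refine le_trans (ContinuousLinearMap.opNorm_smul_le (F z ξ) (L ξ)) ?_
      calc ‖F z ξ‖ * ‖L ξ‖ ≤ Real.exp (-(δ * ‖ξ‖)) * ((n : ℝ) * ‖ξ‖) :=
            mul_le_mul (hFbound z hz ξ) (hLnorm ξ) (norm_nonneg _) (Real.exp_nonneg _)
        _ = (n : ℝ) * (‖ξ‖ * Real.exp (-(δ * ‖ξ‖))) := by ring
    · exact hboundint
    · filter_upwards with ξ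
      intro z _
      exact hderiv ξ z
  exact main.differentiableAt.differentiableWithinAt
end

section
/- Let λ > 0 and t ∈ ℝ. For each ε > 0 the function τ ↦ e^{itτ}(λ² − τ² + iε)^{−1} is Lebesgue integrable on ℝ, and lim_{ε→0⁺} ∫_ℝ e^{itτ} (λ² − τ² + iε)^{−1} dτ = −iπ · e^{i|t|λ}/λ. -/
open Real Filter MeasureTheory Set FourierTransform

lemma integrableOn_cexp_Ioi {c : ℂ} (hc : c.re < 0) :
    IntegrableOn (fun s : ℝ => Complex.exp (c * s)) (Set.Ioi (0:ℝ)) := by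
  refine (exp_neg_integrableOn_Ioi 0 (neg_pos.2 hc)).mono'
    ((Complex.continuous_exp.comp
      (continuous_const.mul Complex.continuous_ofReal)).aestronglyMeasurable) ?_
  filter_upwards with s
  simp only [Complex.norm_exp, Complex.mul_re, Complex.ofReal_re,
    Complex.ofReal_im, mul_zero, sub_zero, neg_mul, neg_neg, le_refl]

lemma integral_cexp_Ioi {c : ℂ} (hc : c.re < 0) :
    ∫ s in Set.Ioi (0:ℝ), Complex.exp (c * s) = -c⁻¹ := by
  have hc0 : c ≠ 0 := fun h => by simp [h] at hc
  have hd : ∀ x ∈ Set.Ici (0:ℝ),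
      HasDerivAt (fun s : ℝ => c⁻¹ * Complex.exp (c * s)) (Complex.exp (c * x)) x := by
    intro x _
    have h1 : HasDerivAt (fun s : ℝ => c * (s:ℂ)) c x := by
      simpa using (Complex.ofRealCLM.hasDerivAt (x := x)).const_mul c
    have h2 := h1.cexp
    have h3 := h2.const_mul c⁻¹
    rw [mul_comm (Complex.exp _) c, ← mul_assoc, inv_mul_cancel₀ hc0, one_mul] at h3
    exact h3
  have htend : Tendsto (fun x : ℝ => c⁻¹ * Complex.exp (c * x)) atTop (nhds 0) := by
    have h1 : Tendsto (fun x : ℝ => c.re * x) atTop atBot := by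
      have := (tendsto_id (α := ℝ) (x := atTop)).const_mul_atTop (neg_pos.2 hc)
      have h := tendsto_neg_atTop_atBot.comp this
      refine h.congr fun x => ?_
      simp [neg_mul]
    have h2 : Tendsto (fun x : ℝ => ‖c⁻¹‖ * Real.exp (c.re * x)) atTop (nhds 0) := by
      simpa using (Real.tendsto_exp_atBot.comp h1).const_mul ‖c⁻¹‖
    refine squeeze_zero_norm (fun x => ?_) h2
    simp [Complex.norm_exp, Complex.mul_re]
  have := integral_Ioi_of_hasDerivAt_of_tendsto' hd (integrableOn_cexp_Ioi hc) htend
  simp only [Complex.ofReal_zero, mul_zero, Complex.exp_zero, mul_one, zero_sub] at this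
  rw [this]

lemma integrableOn_Iic_comp_neg {f : ℝ → ℂ} (h : IntegrableOn f (Ioi (0:ℝ))) :
    IntegrableOn (fun x => f (-x)) (Iic (0:ℝ)) := by
  rw [← Measure.map_neg_eq_self (volume : Measure ℝ)]
  have m : MeasurableEmbedding fun x : ℝ => -x := (Homeomorph.neg ℝ).measurableEmbedding
  rw [m.integrableOn_map_iff]
  simp_rw [Function.comp_def, neg_neg, neg_preimage, neg_Iic, neg_zero]
  exact Iff.mpr integrableOn_Ici_iff_integrableOn_Ioi h

lemma key_int (a : ℂ) (ha : 0 < a.im) (b : ℝ) :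
    Integrable (fun s : ℝ =>
        Complex.exp (Complex.I * b * s) * Complex.exp (Complex.I * a * |s|)) ∧
      ∫ s : ℝ, Complex.exp (Complex.I * b * s) * Complex.exp (Complex.I * a * |s|)
        = Complex.I * ((a + b)⁻¹ + (a - b)⁻¹) := by
  set f : ℝ → ℂ := fun s => Complex.exp (Complex.I * b * s) * Complex.exp (Complex.I * a * |s|)
    with hf
  have hcp : (Complex.I * a + Complex.I * b).re < 0 := by
    simp [Complex.add_re, Complex.mul_re]; linarith
  have hcm : (Complex.I * a - Complex.I * b).re < 0 := by
    simp [Complex.sub_re, Complex.mul_re]; linarith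
  have heqp : EqOn (fun s : ℝ => Complex.exp ((Complex.I * a + Complex.I * b) * s)) f (Ioi 0) := by
    intro s hs
    simp only [hf, abs_of_pos (mem_Ioi.mp hs), ← Complex.exp_add]
    ring_nf
  have heqm : EqOn (fun s : ℝ => Complex.exp ((Complex.I * a - Complex.I * b) * s))
      (fun s => f (-s)) (Ioi 0) := by
    intro s hs
    simp only [hf, abs_neg, abs_of_pos (mem_Ioi.mp hs), ← Complex.exp_add, Complex.ofReal_neg]
    ring_nf
  have hpos : IntegrableOn f (Ioi 0) :=
    (integrableOn_cexp_Ioi hcp).congr_fun heqp measurableSet_Ioi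
  have hnegIoi : IntegrableOn (fun s => f (-s)) (Ioi 0) :=
    (integrableOn_cexp_Ioi hcm).congr_fun heqm measurableSet_Ioi
  have hneg : IntegrableOn f (Iic 0) := by
    have := integrableOn_Iic_comp_neg hnegIoi
    simpa [neg_neg] using this
  have hint : Integrable f := by
    rw [← integrableOn_univ, ← Iic_union_Ioi (a := (0:ℝ))]
    exact hneg.union hpos
  refine ⟨hint, ?_⟩
  have hsplit := intervalIntegral.integral_Iic_add_Ioi (b := (0:ℝ)) hneg hpos
  have hIoi : ∫ s in Ioi (0:ℝ), f s = -(Complex.I * a + Complex.I * b)⁻¹ := by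
    rw [← setIntegral_congr_fun measurableSet_Ioi heqp]
    exact integral_cexp_Ioi hcp
  have hIic : ∫ s in Iic (0:ℝ), f s = -(Complex.I * a - Complex.I * b)⁻¹ := by
    have h1 : ∫ s in Iic (0:ℝ), f s = ∫ s in Ioi (0:ℝ), f (-s) := by
      rw [integral_comp_neg_Ioi]
      norm_num
    rw [h1, ← setIntegral_congr_fun measurableSet_Ioi heqm]
    exact integral_cexp_Ioi hcm
  have hab1 : a + (b:ℂ) ≠ 0 := by
    intro h
    have := congrArg Complex.im h
    simp at this
    linarith
  have hab2 : a - (b:ℂ) ≠ 0 := by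
    intro h
    have := congrArg Complex.im h
    simp at this
    linarith
  rw [← hsplit, hIic, hIoi]
  have hfac1 : Complex.I * a + Complex.I * b = Complex.I * (a + b) := by ring
  have hfac2 : Complex.I * a - Complex.I * b = Complex.I * (a - b) := by ring
  rw [hfac1, hfac2, mul_inv, mul_inv, Complex.inv_I]
  ring

lemma integrable_inv_sub_sq (z : ℂ) (hz : z.im ≠ 0) :
    Integrable (fun x : ℝ => (z - (x:ℂ)^2)⁻¹) := by
  have hne : ∀ x : ℝ, z - (x:ℂ)^2 ≠ 0 := by
    intro x h
    have := congrArg Complex.im h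
    simp [Complex.sub_im, ← Complex.ofReal_pow] at this
    exact hz this
  set C : ℝ := max ((2*|z.re|+2)/|z.im|) 2 with hC
  have hCnn : (0:ℝ) ≤ C := le_trans (by norm_num) (le_max_right _ _)
  have key : ∀ x : ℝ, 1 + x^2 ≤ C * ‖z - (x:ℂ)^2‖ := by
    intro x
    have him : |z.im| ≤ ‖z - (x:ℂ)^2‖ := by
      have h := Complex.abs_im_le_norm (z - (x:ℂ)^2)
      simpa [Complex.sub_im, ← Complex.ofReal_pow] using h
    have hre : |z.re - x^2| ≤ ‖z - (x:ℂ)^2‖ := by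
      have h := Complex.abs_re_le_norm (z - (x:ℂ)^2)
      simpa [Complex.sub_re, ← Complex.ofReal_pow] using h
    rcases le_or_gt (x^2) (2*|z.re|+1) with h | h
    · calc 1 + x^2 ≤ 2*|z.re| + 2 := by linarith
        _ = ((2*|z.re|+2)/|z.im|) * |z.im| := by
            field_simp
        _ ≤ C * ‖z - (x:ℂ)^2‖ := by
            apply mul_le_mul (le_max_left _ _) him (abs_nonneg _) hCnn
    · have h2 : (1+x^2)/2 ≤ |z.re - x^2| := by
        calc (1+x^2)/2 ≤ x^2 - z.re := by
              have h3 := le_abs_self z.re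
              linarith
          _ ≤ |x^2 - z.re| := le_abs_self _
          _ = |z.re - x^2| := abs_sub_comm _ _
      calc 1 + x^2 = 2 * ((1+x^2)/2) := by ring
        _ ≤ 2 * |z.re - x^2| := by linarith
        _ ≤ C * ‖z - (x:ℂ)^2‖ := mul_le_mul (le_max_right _ _) hre (abs_nonneg _) hCnn
  have hcont : Continuous (fun x : ℝ => (z - (x:ℂ)^2)⁻¹) :=
    (continuous_const.sub ((Complex.continuous_ofReal).pow 2)).inv₀ hne
  refine (integrable_inv_one_add_sq.const_mul C).mono' hcont.aestronglyMeasurable ?_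
  filter_upwards with x
  have habs : 0 < ‖z - (x:ℂ)^2‖ := norm_pos_iff.mpr (hne x)
  have h1x : (0:ℝ) < 1 + x^2 := by positivity
  rw [norm_inv, inv_eq_one_div, mul_comm, inv_mul_eq_div,
    div_le_div_iff₀ habs h1x]
  have := key x
  linarith

lemma main_formula (a : ℂ) (ha : 0 < a.im) (hz : (a^2).im ≠ 0) (t : ℝ) :
    Integrable (fun τ : ℝ => Complex.exp (Complex.I * t * τ) * (a^2 - (τ:ℂ)^2)⁻¹) ∧
    ∫ τ : ℝ, Complex.exp (Complex.I * t * τ) * (a^2 - (τ:ℂ)^2)⁻¹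
      = -Complex.I * ↑π * Complex.exp (Complex.I * a * |t|) / a := by
  have ha0 : a ≠ 0 := by
    intro h; rw [h] at ha; simp at ha
  have hplus : ∀ r : ℝ, a + r ≠ 0 := by
    intro r h
    have := congrArg Complex.im h
    simp at this
    linarith
  have hminus : ∀ r : ℝ, a - r ≠ 0 := by
    intro r h
    have := congrArg Complex.im h
    simp at this
    linarith
  have hsq : ∀ r : ℝ, a^2 - (r:ℂ)^2 ≠ 0 := by
    intro r
    have : a^2 - (r:ℂ)^2 = (a - r) * (a + r) := by ring
    rw [this]
    exact mul_ne_zero (hminus r) (hplus r)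
  set g : ℝ → ℂ := fun s => Complex.exp (Complex.I * a * |s|) with hgdef
  have hg_cont : Continuous g :=
    Complex.continuous_exp.comp
      (continuous_const.mul (Complex.continuous_ofReal.comp continuous_abs))
  have hg_int : Integrable g := by
    have h := (key_int a ha 0).1
    simpa using h
  -- Fourier transform of g
  have hF : ∀ ξ : ℝ, 𝓕 g ξ = (2*a*Complex.I) * (a^2 - ((2*π*ξ : ℝ):ℂ)^2)⁻¹ := by
    intro ξ
    rw [Real.fourier_real_eq_integral_exp_smul]
    have h1 : ∀ v : ℝ, Complex.exp (↑(-2 * π * v * ξ) * Complex.I) • g v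
        = Complex.exp (Complex.I * ((-2*π*ξ : ℝ):ℂ) * v) * g v := by
      intro v
      rw [smul_eq_mul]
      congr 2
      push_cast
      ring
    rw [integral_congr_ae (Filter.Eventually.of_forall h1), (key_int a ha (-2*π*ξ)).2]
    have key2 : ∀ r : ℂ, a + r ≠ 0 → a - r ≠ 0 →
        Complex.I * ((a + r)⁻¹ + (a - r)⁻¹) = 2*a*Complex.I * (a^2 - r^2)⁻¹ := by
      intro r h2 h3
      rw [inv_add_inv h2 h3, show (a + r) + (a - r) = 2*a by ring,
        show (a+r)*(a-r) = a^2 - r^2 by ring, div_eq_mul_inv]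
      ring
    rw [key2 _ (hplus (-2*π*ξ)) (hminus (-2*π*ξ)),
      show ((-2*π*ξ:ℝ):ℂ)^2 = ((2*π*ξ:ℝ):ℂ)^2 by push_cast; ring]
  have hFg : (𝓕 g) = fun ξ : ℝ => (2*a*Complex.I) * (a^2 - ((2*π*ξ : ℝ):ℂ)^2)⁻¹ := funext hF
  have hFint : Integrable (𝓕 g) := by
    rw [hFg]
    have h2pi : (2*π : ℝ) ≠ 0 := by positivity
    exact ((integrable_inv_sub_sq (a^2) hz).comp_mul_left' h2pi).const_mul _
  have hinv : 𝓕⁻ (𝓕 g) t = g t :=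
    hg_int.fourierInv_fourier_eq hFint hg_cont.continuousAt
  set h : ℝ → ℂ := fun τ => Complex.exp (Complex.I * t * τ) * (a^2 - (τ:ℂ)^2)⁻¹ with hhdef
  have h2aI : (2*a*Complex.I) ≠ 0 :=
    mul_ne_zero (mul_ne_zero two_ne_zero ha0) Complex.I_ne_zero
  have hinv' : 𝓕⁻ (𝓕 g) t = ∫ ξ : ℝ, Complex.exp (↑(2 * π * (ξ * t)) * Complex.I) * 𝓕 g ξ := by
    rw [Real.fourierInv_eq']
    refine integral_congr_ae (Filter.Eventually.of_forall fun ξ => ?_)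
    simp [RCLike.inner_apply, conj_trivial, smul_eq_mul, mul_comm (t:ℂ) (ξ:ℂ)]
  have hpt : ∀ ξ : ℝ, h (2*π*ξ)
      = (2*a*Complex.I)⁻¹ * (Complex.exp (↑(2 * π * (ξ * t)) * Complex.I) * 𝓕 g ξ) := by
    intro ξ
    rw [hF ξ]
    simp only [hhdef]
    rw [show Complex.I * (t:ℂ) * ((2*π*ξ:ℝ):ℂ) = ((2 * π * (ξ * t) : ℝ):ℂ) * Complex.I by
      push_cast; ring]
    rw [show (2*a*Complex.I)⁻¹ * (Complex.exp (((2 * π * (ξ * t) : ℝ):ℂ) * Complex.I) *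
        (2*a*Complex.I * (a^2 - ((2*π*ξ:ℝ):ℂ)^2)⁻¹))
      = ((2*a*Complex.I)⁻¹ * (2*a*Complex.I)) *
        (Complex.exp (((2 * π * (ξ * t):ℝ):ℂ) * Complex.I) * (a^2 - ((2*π*ξ:ℝ):ℂ)^2)⁻¹) by ring]
    rw [inv_mul_cancel₀ h2aI, one_mul]
  have hval : (∫ ξ : ℝ, h (2*π*ξ)) = (2*a*Complex.I)⁻¹ * Complex.exp (Complex.I * a * |t|) := by
    rw [integral_congr_ae (Filter.Eventually.of_forall hpt), integral_const_mul, ← hinv', hinv]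
  have hsub := MeasureTheory.Measure.integral_comp_mul_left h (2*π)
  rw [hval] at hsub
  have h2pi : (0:ℝ) < 2*π := by positivity
  rw [abs_of_pos (by positivity : (0:ℝ) < (2*π)⁻¹), Complex.real_smul] at hsub
  constructor
  · refine (integrable_inv_sub_sq (a^2) hz).bdd_mul (c := 1)
      ((Complex.continuous_exp.comp
        ((continuous_const.mul Complex.continuous_ofReal))).aestronglyMeasurable) (Filter.Eventually.of_forall fun τ => ?_)
    rw [show Complex.I * (t:ℂ) * (τ:ℂ) = ((t*τ : ℝ):ℂ) * Complex.I by push_cast; ring]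
    simp [Complex.norm_exp]
  · have hend : (∫ τ : ℝ, h τ)
        = (((2*π)⁻¹ : ℝ):ℂ)⁻¹ * ((2*a*Complex.I)⁻¹ * Complex.exp (Complex.I * a * |t|)) := by
      rw [hsub, ← mul_assoc, inv_mul_cancel₀
        (Complex.ofReal_ne_zero.mpr (by positivity : ((2*π)⁻¹:ℝ) ≠ 0)), one_mul]
    rw [hend]
    have hcast : (((2*π)⁻¹ : ℝ):ℂ)⁻¹ = 2*(π:ℂ) := by
      push_cast
      rw [inv_inv]
    rw [hcast, div_eq_mul_inv, mul_inv, mul_inv, Complex.inv_I]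
    ring

/-- The residue computation for the Hadamard–Feynman fundamental solution:
`lim_{ε→0⁺} ∫_ℝ e^{itτ}(λ² − τ² + iε)^{−1} dτ = −iπ e^{i|t|λ}/λ`. -/
theorem feynman_residue (lam t : ℝ) (hlam : 0 < lam) :
    (∀ ε : ℝ, 0 < ε →
      MeasureTheory.Integrable
        (fun τ : ℝ => Complex.exp (Complex.I * t * τ) *
          (((lam ^ 2 - τ ^ 2 : ℝ) : ℂ) + Complex.I * ε)⁻¹)) ∧
    Tendsto
      (fun ε : ℝ => ∫ τ : ℝ, Complex.exp (Complex.I * t * τ) *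
        (((lam ^ 2 - τ ^ 2 : ℝ) : ℂ) + Complex.I * ε)⁻¹)
      (nhdsWithin 0 (Set.Ioi 0))
      (nhds (-Complex.I * π * Complex.exp (Complex.I * |t| * lam) / lam)) := by
  set zf : ℝ → ℂ := fun ε => ((lam^2 : ℝ) : ℂ) + Complex.I * ε with hzf
  set af : ℝ → ℂ := fun ε => (zf ε) ^ ((1:ℂ)/2) with haf
  have hzim : ∀ ε : ℝ, (zf ε).im = ε := by
    intro ε
    simp [hzf, pow_two, Complex.add_im, Complex.mul_im, Complex.mul_re]
  have hzre : ∀ ε : ℝ, (zf ε).re = lam^2 := by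
    intro ε
    simp [hzf, pow_two, Complex.add_re, Complex.mul_re, Complex.mul_im]
  have hz0 : ∀ ε : ℝ, 0 < ε → zf ε ≠ 0 := by
    intro ε hε h
    have := congrArg Complex.im h
    rw [hzim ε] at this
    simp at this
    linarith
  have hasq : ∀ ε : ℝ, 0 < ε → (af ε)^2 = zf ε := by
    intro ε hε
    rw [haf]
    simp only []
    rw [sq, ← Complex.cpow_add _ _ (hz0 ε hε)]
    norm_num
  have haim : ∀ ε : ℝ, 0 < ε → 0 < (af ε).im := by
    intro ε hε
    have harg0 : 0 < Complex.arg (zf ε) := by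
      rcases lt_or_eq_of_le ((Complex.arg_nonneg_iff (z := zf ε)).mpr (by rw [hzim]; exact hε.le)) with h | h
      · exact h
      · exfalso
        have := Complex.arg_eq_zero_iff.mp h.symm
        rw [hzim] at this
        linarith [this.2]

    have hargpi : Complex.arg (zf ε) < π :=
      Complex.arg_lt_pi_iff.mpr (Or.inl (by rw [hzre]; positivity))
    rw [haf]
    simp only []
    rw [Complex.cpow_def_of_ne_zero (hz0 ε hε), Complex.exp_im]
    apply mul_pos (Real.exp_pos _)
    have him : (Complex.log (zf ε) * ((1:ℂ)/2)).im = Complex.arg (zf ε) / 2 := by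
      rw [Complex.mul_im]
      simp [Complex.log_im]
      ring
    rw [him]
    apply Real.sin_pos_of_pos_of_lt_pi
    · linarith
    · linarith [Real.pi_pos]
  have hintg : ∀ ε : ℝ, 0 < ε → ∀ τ : ℝ,
      Complex.exp (Complex.I * t * τ) * (((lam ^ 2 - τ ^ 2 : ℝ) : ℂ) + Complex.I * ε)⁻¹
        = Complex.exp (Complex.I * t * τ) * ((af ε)^2 - (τ:ℂ)^2)⁻¹ := by
    intro ε hε τ
    rw [hasq ε hε]
    congr 1
    rw [hzf]
    push_cast
    ring_nf
  have hmain := fun (ε : ℝ) (hε : 0 < ε) =>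
    main_formula (af ε) (haim ε hε) (by rw [hasq ε hε, hzim]; exact hε.ne') t
  constructor
  · intro ε hε
    have h := (hmain ε hε).1
    exact h.congr (Filter.Eventually.of_forall fun τ => (hintg ε hε τ).symm)
  · -- limit
    have hlamne : ((lam:ℂ)) ≠ 0 := Complex.ofReal_ne_zero.mpr hlam.ne'
    have hz_t : Tendsto zf (nhdsWithin 0 (Set.Ioi 0)) (nhds ((lam^2 : ℝ) : ℂ)) := by
      have hc : Continuous zf := continuous_const.add (continuous_const.mul Complex.continuous_ofReal)
      have := (hc.tendsto 0).mono_left (nhdsWithin_le_nhds (s := Set.Ioi (0:ℝ)))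
      simpa [hzf] using this
    have hslit : ((lam^2 : ℝ) : ℂ) ∈ Complex.slitPlane := by
      rw [Complex.mem_slitPlane_iff]
      exact Or.inl (by rw [Complex.ofReal_re]; positivity)
    have ha_t : Tendsto af (nhdsWithin 0 (Set.Ioi 0))
        (nhds (((lam^2 : ℝ) : ℂ) ^ ((1:ℂ)/2))) :=
      (continuousAt_cpow_const hslit).tendsto.comp hz_t
    have hval : ((lam^2 : ℝ) : ℂ) ^ ((1:ℂ)/2) = (lam : ℂ) := by
      rw [show ((1:ℂ)/2) = (((1/2 : ℝ)) : ℂ) by norm_num,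
        ← Complex.ofReal_cpow (by positivity : (0:ℝ) ≤ lam^2)]
      norm_cast
      rw [← Real.sqrt_eq_rpow, Real.sqrt_sq hlam.le]
    rw [hval] at ha_t
    have hGcont : ContinuousAt
        (fun w : ℂ => -Complex.I * ↑π * Complex.exp (Complex.I * w * ↑|t|) / w) (lam : ℂ) := by
      apply ContinuousAt.div
      · exact continuousAt_const.mul (Complex.continuous_exp.continuousAt.comp
          (((continuous_const.mul continuous_id).mul continuous_const).continuousAt))
      · exact continuousAt_id
      · exact hlamne
    have hG_t := hGcont.tendsto.comp ha_t
    have hGlam : (-Complex.I * ↑π * Complex.exp (Complex.I * (lam:ℂ) * ↑|t|) / (lam:ℂ))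
        = -Complex.I * ↑π * Complex.exp (Complex.I * ↑|t| * (lam:ℂ)) / (lam:ℂ) := by
      rw [show Complex.I * (lam:ℂ) * ((|t|:ℝ):ℂ) = Complex.I * ((|t|:ℝ):ℂ) * (lam:ℂ) by ring]
    rw [hGlam] at hG_t
    refine hG_t.congr' ?_
    filter_upwards [eventually_mem_nhdsWithin] with ε hε
    have h2 := (hmain ε hε).2
    rw [Function.comp_apply, ← h2]
    exact integral_congr_ae (Filter.Eventually.of_forall fun τ => (hintg ε hε τ).symm)
end
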